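/- Let (π^N)_{N≥1} and π be probability measures on [0,1]^d with ‖π^N − π‖_E → 0 as N → ∞, where π is absolutely continuous with respect to Lebesgue measure with a bounded density. Let g̃ : [0,1]^d × [0,1]^d → [0,∞) be continuous (hence bounded) and satisfy ∫_{[0,1]^d} g̃(x, y) π(dx) = 1 for every y ∈ [0,1]^d. Define the Markov kernel M(y, dx) = g̃(x, y) π(dx), and for every N such that c_N := inf_{y∈[0,1]^d} ∫ g̃(x, y) π^N(dx) > 0, define M^N(y, dx) = g̃(x, y) π^N(dx) / ∫ g̃(x', y) π^N(dx'). Then c_N > 0 for all N sufficiently large, and sup_{y∈[0,1]^d} ‖M^N(y, ·) − M(y, ·)‖_E → 0 as N → ∞. -/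

import Mathlib

open MeasureTheory ProbabilityTheory Filter Set
open scoped ENNReal NNReal

noncomputable section

/-- The closed unit cube `[0,1]^d` in `ℝ^d`. -/
def cubeIcc (d : ℕ) : Set (Fin d → ℝ) := Set.univ.pi fun _ => Set.Icc (0 : ℝ) 1

/-- The half-open unit cube `[0,1)^d` in `ℝ^d`. -/
def cubeIco (d : ℕ) : Set (Fin d → ℝ) := Set.univ.pi fun _ => Set.Ico (0 : ℝ) 1

/-- `IsGoodBox a b` : the box `∏ᵢ [aᵢ, bᵢ]` satisfies `0 ≤ aᵢ < bᵢ < 1` for all `i`. -/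
def IsGoodBox {d : ℕ} (a b : Fin d → ℝ) : Prop := ∀ i, 0 ≤ a i ∧ a i < b i ∧ b i < 1

/-- The closed box `∏ᵢ [aᵢ, bᵢ]` in `ℝ^d`. -/
def clBox {d : ℕ} (a b : Fin d → ℝ) : Set (Fin d → ℝ) :=
  Set.univ.pi fun i => Set.Icc (a i) (b i)

/-- The extreme norm distance `‖μ − ν‖_E` between two measures on `ℝ^d`:
the supremum over boxes `∏ᵢ [aᵢ, bᵢ]` with `0 ≤ aᵢ < bᵢ < 1` of `|μ(B) − ν(B)|`. -/
def extDist {d : ℕ} (μ ν : Measure (Fin d → ℝ)) : ℝ :=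
  ⨆ p : {q : (Fin d → ℝ) × (Fin d → ℝ) // IsGoodBox q.1 q.2},
    |(μ (clBox p.1.1 p.1.2)).toReal - (ν (clBox p.1.1 p.1.2)).toReal|

namespace BKUCaux

variable {d : ℕ}

lemma measurable_clBox (a b : Fin d → ℝ) : MeasurableSet (clBox a b) :=
  MeasurableSet.univ_pi fun _ => measurableSet_Icc

lemma measurable_cube : MeasurableSet (cubeIcc d) :=
  MeasurableSet.univ_pi fun _ => measurableSet_Icc

lemma clBox_subset_cube {a b : Fin d → ℝ} (h0 : ∀ i, 0 ≤ a i) (h1 : ∀ i, b i ≤ 1) :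
    clBox a b ⊆ cubeIcc d := by
  intro x hx i _
  have := hx i (mem_univ i)
  exact ⟨le_trans (h0 i) this.1, le_trans this.2 (h1 i)⟩

lemma toReal_le_one (μ : Measure (Fin d → ℝ)) [IsProbabilityMeasure μ] (S : Set (Fin d → ℝ)) :
    (μ S).toReal ≤ 1 := by
  have h := prob_le_one (μ := μ) (s := S)
  simpa using ENNReal.toReal_mono (by simp) h

lemma toReal_mono_meas (μ : Measure (Fin d → ℝ)) [IsFiniteMeasure μ] {S T : Set (Fin d → ℝ)}
    (h : S ⊆ T) : (μ S).toReal ≤ (μ T).toReal :=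
  ENNReal.toReal_mono (measure_ne_top μ T) (measure_mono h)

instance goodBoxNonempty : Nonempty {q : (Fin d → ℝ) × (Fin d → ℝ) // IsGoodBox q.1 q.2} :=
  ⟨⟨(fun _ => 0, fun _ => 1/2), fun _ => by norm_num⟩⟩

lemma abs_le_extDist (μ ν : Measure (Fin d → ℝ)) [IsProbabilityMeasure μ]
    [IsProbabilityMeasure ν] {a b : Fin d → ℝ} (h : IsGoodBox a b) :
    |(μ (clBox a b)).toReal - (ν (clBox a b)).toReal| ≤ extDist μ ν := by
  have hbdd : BddAbove (Set.range fun p : {q : (Fin d → ℝ) × (Fin d → ℝ) // IsGoodBox q.1 q.2} =>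
      |(μ (clBox p.1.1 p.1.2)).toReal - (ν (clBox p.1.1 p.1.2)).toReal|) := by
    refine ⟨2, ?_⟩
    rintro x ⟨p, rfl⟩
    have h1 := toReal_le_one μ (clBox p.1.1 p.1.2)
    have h2 := toReal_le_one ν (clBox p.1.1 p.1.2)
    have h3 : (0:ℝ) ≤ (μ (clBox p.1.1 p.1.2)).toReal := ENNReal.toReal_nonneg
    have h4 : (0:ℝ) ≤ (ν (clBox p.1.1 p.1.2)).toReal := ENNReal.toReal_nonneg
    rw [abs_le]; constructor <;> linarith
  exact le_ciSup hbdd (⟨(a, b), h⟩ : {q : (Fin d → ℝ) × (Fin d → ℝ) // IsGoodBox q.1 q.2})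

lemma extDist_nonneg (μ ν : Measure (Fin d → ℝ)) : 0 ≤ extDist μ ν :=
  Real.iSup_nonneg fun _ => abs_nonneg _

/-- measure of a set inside a coordinate slab of width `w`, under `π ≤ M • volume`. -/
lemma slab_bound (π : Measure (Fin d → ℝ)) {M : ℝ≥0∞} (hM : M ≠ ⊤) (hle : π ≤ M • volume)
    (i : Fin d) (t : ℝ) {w : ℝ} (hw : 0 ≤ w) {A : Set (Fin d → ℝ)}
    (hA : A ⊆ Set.univ.pi fun j => if j = i then Icc t (t + w) else Icc (0:ℝ) 1) :
    π A ≤ M * ENNReal.ofReal w := by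
  have hvol : volume (Set.univ.pi fun j => if j = i then Icc t (t + w) else Icc (0:ℝ) 1)
      = ENNReal.ofReal w := by
    rw [volume_pi_pi]
    have : ∀ j : Fin d, volume (if j = i then Icc t (t + w) else Icc (0:ℝ) 1)
        = if j = i then ENNReal.ofReal w else 1 := by
      intro j
      by_cases hj : j = i <;> simp [hj, Real.volume_Icc]
    simp only [this]
    simp
  calc π A ≤ π (Set.univ.pi fun j => if j = i then Icc t (t + w) else Icc (0:ℝ) 1) :=
        measure_mono hA
    _ ≤ (M • volume) (Set.univ.pi fun j => if j = i then Icc t (t + w) else Icc (0:ℝ) 1) :=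
        hle _
    _ = M * ENNReal.ofReal w := by rw [Measure.smul_apply, smul_eq_mul, hvol]

lemma slab_bound_real (π : Measure (Fin d → ℝ)) [IsFiniteMeasure π] {M : ℝ≥0∞} (hM : M ≠ ⊤)
    (hle : π ≤ M • volume)
    (i : Fin d) (t : ℝ) {w : ℝ} (hw : 0 ≤ w) {A : Set (Fin d → ℝ)}
    (hA : A ⊆ Set.univ.pi fun j => if j = i then Icc t (t + w) else Icc (0:ℝ) 1) :
    (π A).toReal ≤ M.toReal * w := by
  have h := slab_bound π hM hle i t hw hA
  have h2 : (M * ENNReal.ofReal w).toReal = M.toReal * w := by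
    rw [ENNReal.toReal_mul, ENNReal.toReal_ofReal hw]
  have h3 : M * ENNReal.ofReal w ≠ ⊤ := ENNReal.mul_ne_top hM ENNReal.ofReal_ne_top
  calc (π A).toReal ≤ (M * ENNReal.ofReal w).toReal := ENNReal.toReal_mono h3 h
    _ = M.toReal * w := h2

/-- union-of-slabs bound -/
lemma slabs_bound (π : Measure (Fin d → ℝ)) [IsFiniteMeasure π] {M : ℝ≥0∞} (hM : M ≠ ⊤)
    (hle : π ≤ M • volume) (t : Fin d → ℝ) {w : ℝ} (hw : 0 ≤ w) {A : Set (Fin d → ℝ)}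
    (hA : A ⊆ ⋃ i, Set.univ.pi fun j => if j = i then Icc (t i) (t i + w) else Icc (0:ℝ) 1) :
    (π A).toReal ≤ d * (M.toReal * w) := by
  have h : π A ≤ ∑ i : Fin d, M * ENNReal.ofReal w := by
    calc π A ≤ π (⋃ i, Set.univ.pi fun j => if j = i then Icc (t i) (t i + w) else Icc (0:ℝ) 1) :=
          measure_mono hA
      _ ≤ ∑' i : Fin d, π (Set.univ.pi fun j => if j = i then Icc (t i) (t i + w) else Icc (0:ℝ) 1) :=
          measure_iUnion_le _
      _ = ∑ i : Fin d, π (Set.univ.pi fun j => if j = i then Icc (t i) (t i + w) else Icc (0:ℝ) 1) :=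
          tsum_fintype _
      _ ≤ ∑ i : Fin d, M * ENNReal.ofReal w :=
          Finset.sum_le_sum fun i _ => slab_bound π hM hle i (t i) hw (subset_rfl)
  have hne : (∑ i : Fin d, M * ENNReal.ofReal w) ≠ ⊤ := by
    refine ENNReal.sum_ne_top.mpr fun i _ => ENNReal.mul_ne_top hM ENNReal.ofReal_ne_top
  have := ENNReal.toReal_mono hne h
  rw [ENNReal.toReal_sum (fun i _ => ENNReal.mul_ne_top hM ENNReal.ofReal_ne_top)] at this
  simp only [ENNReal.toReal_mul, ENNReal.toReal_ofReal hw, Finset.sum_const,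
    Finset.card_univ, Fintype.card_fin, nsmul_eq_mul] at this
  exact this


theorem key_est (μ π : Measure (Fin d → ℝ)) [IsProbabilityMeasure μ] [IsProbabilityMeasure π]
    {M : ℝ≥0∞} (hM : M ≠ ⊤) (hle : π ≤ M • volume)
    {S : Set (Fin d → ℝ)} {α β : Fin d → ℝ}
    (hα : ∀ i, 0 ≤ α i) (hβ : ∀ i, β i < 1)
    {η : ℝ} (hη : 0 < η)
    (hin : clBox α (fun i => β i - η) ⊆ S) (hout : S ⊆ clBox α β) :
    |(μ S).toReal - (π S).toReal| ≤ extDist μ π + M.toReal * d * η := by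
  have hMr : 0 ≤ M.toReal := ENNReal.toReal_nonneg
  have hE : 0 ≤ extDist μ π := extDist_nonneg μ π
  by_cases hS : S = ∅
  · subst hS
    simp only [measure_empty, ENNReal.toReal_zero, sub_self, abs_zero]
    positivity
  -- S nonempty: pick point, get α ≤ β
  obtain ⟨x₀, hx₀⟩ := Set.nonempty_iff_ne_empty.mpr hS
  have hαβ : ∀ i, α i ≤ β i := fun i => by
    have := hout hx₀ i (mem_univ i); exact le_trans this.1 this.2
  have hd1 : ∀ (_ : Fin d), (1:ℝ) ≤ d := fun i => by
    have : 0 < d := i.pos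
    exact_mod_cast this
  by_cases hcase : ∀ i, α i < β i - η
  · -- Case A
    set Bin := clBox α (fun i => β i - η) with hBin
    set Bout := clBox α β with hBout
    have hGin : IsGoodBox α (fun i => β i - η) := fun i =>
      ⟨hα i, hcase i, show β i - η < 1 by linarith [hβ i, hη]⟩
    have hGout : IsGoodBox α β := fun i => ⟨hα i, by linarith [hcase i], hβ i⟩
    have r1 : (μ S).toReal ≤ (μ Bout).toReal := toReal_mono_meas μ hout
    have r1' : (π S).toReal ≤ (π Bout).toReal := toReal_mono_meas π hout
    have r2 : (π Bin).toReal ≤ (π S).toReal := toReal_mono_meas π hin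
    have r2' : (μ Bin).toReal ≤ (μ S).toReal := toReal_mono_meas μ hin
    have e1 : |(μ Bout).toReal - (π Bout).toReal| ≤ extDist μ π := abs_le_extDist μ π hGout
    have e2 : |(μ Bin).toReal - (π Bin).toReal| ≤ extDist μ π := abs_le_extDist μ π hGin
    -- shell bound
    have hshell : (π (Bout \ Bin)).toReal ≤ (d:ℝ) * (M.toReal * η) := by
      refine slabs_bound π hM hle (fun i => β i - η) (le_of_lt hη) ?_
      intro x hx
      obtain ⟨hxo, hxi⟩ := hx
      have : ¬ ∀ i, x i ∈ Icc (α i) (β i - η) := by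
        intro hc; exact hxi fun i _ => hc i
      push_neg at this
      obtain ⟨i, hi⟩ := this
      have hxoi := fun j => hxo j (mem_univ j)
      have hxigt : β i - η < x i := by
        rcases lt_or_ge (x i) (α i) with h | h
        · exact absurd (hxoi i).1 (not_le.mpr h)
        · by_contra hc; exact hi ⟨h, le_of_not_gt hc⟩
      refine mem_iUnion.mpr ⟨i, fun j _ => ?_⟩
      by_cases hj : j = i
      · subst hj
        simp only [if_pos rfl]
        exact ⟨le_of_lt hxigt, by linarith [(hxoi j).2]⟩
      · simp only [if_neg hj]
        exact ⟨le_trans (hα j) (hxoi j).1, by linarith [(hxoi j).2, hβ j]⟩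
    have hsplit : (π Bout).toReal ≤ (π Bin).toReal + (π (Bout \ Bin)).toReal := by
      have h1 : π Bout ≤ π Bin + π (Bout \ Bin) := by
        calc π Bout ≤ π (Bin ∪ Bout \ Bin) := measure_mono (fun x hx => by
              by_cases hxb : x ∈ Bin
              · exact Or.inl hxb
              · exact Or.inr ⟨hx, hxb⟩)
          _ ≤ π Bin + π (Bout \ Bin) := measure_union_le _ _
      have h2 : π Bin + π (Bout \ Bin) ≠ ⊤ :=
        ENNReal.add_ne_top.mpr ⟨measure_ne_top _ _, measure_ne_top _ _⟩
      have := ENNReal.toReal_mono h2 h1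
      rwa [ENNReal.toReal_add (measure_ne_top _ _) (measure_ne_top _ _)] at this
    rw [abs_le] at e1 e2 ⊢
    constructor <;> nlinarith [hshell]
  · -- Case B : some coordinate is thin
    push_neg at hcase
    obtain ⟨i, hi⟩ := hcase
    -- thin outer good box B2
    set ti : ℝ := min (α i + η) ((β i + 1)/2) with hti
    have hti1 : α i < ti := by
      refine lt_min (by linarith) ?_
      nlinarith [hαβ i, hβ i]
    have hti2 : ti < 1 := lt_of_le_of_lt (min_le_right _ _) (by nlinarith [hβ i])
    have hti3 : β i ≤ ti := le_min (by linarith) (by nlinarith [hβ i])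
    have hti4 : ti ≤ α i + η := min_le_left _ _
    set a2 : Fin d → ℝ := Function.update (fun _ => (0:ℝ)) i (α i) with ha2
    set b2 : Fin d → ℝ := Function.update (fun j => max (β j) (1/2)) i ti with hb2
    set B2 := clBox a2 b2 with hB2
    have ha2i : a2 i = α i := Function.update_self _ _ _
    have hb2i : b2 i = ti := Function.update_self _ _ _
    have ha2j : ∀ j, j ≠ i → a2 j = 0 := fun j hj => Function.update_of_ne hj _ _
    have hb2j : ∀ j, j ≠ i → b2 j = max (β j) (1/2) := fun j hj => Function.update_of_ne hj _ _
    have hig : IsGoodBox a2 b2 := by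
      intro j
      rcases eq_or_ne j i with hj | hj
      · subst hj
        rw [ha2i, hb2i]
        exact ⟨hα j, hti1, hti2⟩
      · rw [ha2j j hj, hb2j j hj]
        exact ⟨le_refl 0, lt_max_of_lt_right (by norm_num), max_lt (hβ j) (by norm_num)⟩
    have hsub : S ⊆ B2 := by
      intro x hx j _
      have hxj : x j ∈ Icc (α j) (β j) := hout hx j (mem_univ j)
      show x j ∈ Icc (a2 j) (b2 j)
      rcases eq_or_ne j i with hj | hj
      · subst hj
        rw [ha2i, hb2i]
        exact ⟨hxj.1, le_trans hxj.2 hti3⟩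
      · rw [ha2j j hj, hb2j j hj]
        exact ⟨le_trans (hα j) hxj.1, le_max_of_le_left hxj.2⟩
    have hB2slab : B2 ⊆ Set.univ.pi fun j => if j = i then Icc (α i) (α i + η) else Icc (0:ℝ) 1 := by
      intro x hx j _
      have hxj : x j ∈ Icc (a2 j) (b2 j) := hx j (mem_univ j)
      show x j ∈ (if j = i then Icc (α i) (α i + η) else Icc (0:ℝ) 1)
      rcases eq_or_ne j i with hj | hj
      · subst hj
        rw [ha2i, hb2i] at hxj
        rw [if_pos rfl]
        exact ⟨hxj.1, le_trans hxj.2 hti4⟩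
      · rw [ha2j j hj, hb2j j hj] at hxj
        rw [if_neg hj]
        exact ⟨hxj.1, le_trans hxj.2 (le_of_lt (max_lt (hβ j) (by norm_num)))⟩
    have hπB2 : (π B2).toReal ≤ M.toReal * η :=
      slab_bound_real π hM hle i (α i) (le_of_lt hη) hB2slab
    have e1 : |(μ B2).toReal - (π B2).toReal| ≤ extDist μ π := abs_le_extDist μ π hig
    have r1 : (μ S).toReal ≤ (μ B2).toReal := toReal_mono_meas μ hsub
    have r2 : (π S).toReal ≤ (π B2).toReal := toReal_mono_meas π hsub
    have hπS : 0 ≤ (π S).toReal := ENNReal.toReal_nonneg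
    have hμS : 0 ≤ (μ S).toReal := ENNReal.toReal_nonneg
    have hd1' : (1:ℝ) ≤ d := hd1 i
    rw [abs_le] at e1 ⊢
    constructor <;> nlinarith

set_option maxHeartbeats 3000000 in
theorem main_est (hd : 1 ≤ d)
    (π : Measure (Fin d → ℝ)) [IsProbabilityMeasure π]
    {M : ℝ≥0∞} (hM : M ≠ ⊤) (hle : π ≤ M • volume) (hπK : π (cubeIcc d) = 1)
    (g : (Fin d → ℝ) → (Fin d → ℝ) → ℝ)
    (hgcont : ContinuousOn (fun p : (Fin d → ℝ) × (Fin d → ℝ) => g p.1 p.2)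
      (cubeIcc d ×ˢ cubeIcc d))
    {ε : ℝ} (hε : 0 < ε) :
    ∃ θ > 0, ∀ μ : Measure (Fin d → ℝ), IsProbabilityMeasure μ → extDist μ π ≤ θ →
      ∀ y ∈ cubeIcc d, ∀ a b : Fin d → ℝ,
      (∀ i, 0 ≤ a i) → clBox a b ⊆ cubeIcc d →
      |∫ x in clBox a b, g x y ∂μ - ∫ x in clBox a b, g x y ∂π| ≤ ε := by
  classical
  set K := cubeIcc d with hK
  have hKIcc : K = Set.Icc (0 : Fin d → ℝ) 1 := by
    rw [hK, cubeIcc, ← Set.pi_univ_Icc]; rfl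
  have hKcpt : IsCompact K := by rw [hKIcc]; exact isCompact_Icc
  have hKmeas : MeasurableSet K := measurable_cube
  have hKKcpt : IsCompact (K ×ˢ K) := hKcpt.prod hKcpt
  -- uniform bound
  obtain ⟨C₀, hC₀⟩ := hKKcpt.exists_bound_of_continuousOn hgcont
  set C := max C₀ 0 with hCdef
  have hC0 : 0 ≤ C := le_max_right _ _
  have hC : ∀ x ∈ K, ∀ y ∈ K, |g x y| ≤ C := by
    intro x hx y hy
    have := hC₀ (x, y) (Set.mk_mem_prod hx hy)
    exact le_trans this (le_max_left _ _)
  -- uniform continuity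
  have hUC : ∃ δ > 0, ∀ x ∈ K, ∀ x' ∈ K, ∀ y ∈ K, dist x x' < δ →
      |g x y - g x' y| ≤ ε/8 := by
    have huc := hKKcpt.uniformContinuousOn_of_continuous hgcont
    rw [Metric.uniformContinuousOn_iff] at huc
    obtain ⟨δ, hδ0, hδ⟩ := huc (ε/8) (by positivity)
    refine ⟨δ, hδ0, fun x hx x' hx' y hy hdist => ?_⟩
    have h1 : dist ((x, y) : (Fin d → ℝ) × (Fin d → ℝ)) (x', y) = dist x x' := by
      rw [Prod.dist_eq, dist_self]
      exact max_eq_left dist_nonneg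
    have := hδ (x, y) (Set.mk_mem_prod hx hy) (x', y) (Set.mk_mem_prod hx' hy)
      (by rw [h1]; exact hdist)
    rw [Real.dist_eq] at this
    exact le_of_lt this
  obtain ⟨δ, hδ0, hδ⟩ := hUC
  set Mr := M.toReal with hMr
  have hMr0 : 0 ≤ Mr := ENNReal.toReal_nonneg
  -- choose m
  obtain ⟨m₀, hm₀⟩ := exists_nat_gt (max (1/δ) ((8*C*(Mr*d)+8)/ε))
  set m : ℕ := m₀ + 1 with hmdef
  set n : ℕ := m + 1 with hndef
  have hmn : (m:ℝ) < (n:ℝ) := by exact_mod_cast Nat.lt_succ_self m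
  have hn0 : (0:ℝ) < n := by positivity
  have hm1 : 1 ≤ m := Nat.le_add_left 1 m₀
  have hnm : (m₀ : ℝ) < n := by exact_mod_cast Nat.lt_of_lt_of_le (Nat.lt_succ_self m₀) (Nat.le_succ m)
  have hinvn : (1:ℝ)/n < δ := by
    have h1 : 1/δ < n := lt_trans (lt_of_le_of_lt (le_max_left _ _) hm₀) hnm
    rw [div_lt_iff₀ hn0]
    rw [div_lt_iff₀ hδ0] at h1
    nlinarith
  have hCn : 2*C*(Mr*d)/n ≤ ε/4 := by
    have h1 : (8*C*(Mr*d)+8)/ε < n := lt_trans (lt_of_le_of_lt (le_max_right _ _) hm₀) hnm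
    rw [div_lt_iff₀ hε] at h1
    rw [div_le_iff₀ hn0]
    nlinarith
  -- cells
  set cell : (Fin d → Fin m) → Set (Fin d → ℝ) :=
    fun k => Set.univ.pi fun i => Ico (((k i : ℕ) : ℝ)/n) ((((k i : ℕ) : ℝ)+1)/n) with hcell
  have hcellmeas : ∀ k, MeasurableSet (cell k) :=
    fun k => MeasurableSet.univ_pi fun i => measurableSet_Ico
  have hcellK : ∀ k, cell k ⊆ K := by
    intro k x hx i _
    have h := hx i (mem_univ i)
    obtain ⟨h1, h2⟩ := h
    constructor
    · exact le_trans (by positivity) h1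
    · have hki : ((k i : ℕ) : ℝ) + 1 ≤ n := by
        have h := le_trans (Nat.succ_le_of_lt (k i).isLt) (Nat.le_succ m)
        exact_mod_cast h
      have hle1 : (((k i : ℕ) : ℝ)+1)/n ≤ 1 := by
        rw [div_le_one hn0]; exact hki
      linarith
  -- cell disjointness
  have hcelldisj : Pairwise (Function.onFun Disjoint cell) := by
    intro k k' hkk'
    obtain ⟨i, hi⟩ : ∃ i, k i ≠ k' i := Function.ne_iff.mp hkk'
    rw [Function.onFun, Set.disjoint_left]
    intro x hxk hxk'
    have h1 : x i ∈ Ico (((k i : ℕ):ℝ)/n) ((((k i : ℕ):ℝ)+1)/n) := hxk i (mem_univ i)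
    have h2 : x i ∈ Ico (((k' i : ℕ):ℝ)/n) ((((k' i : ℕ):ℝ)+1)/n) := hxk' i (mem_univ i)
    have c1 : ((k i : ℕ):ℝ)/n < (((k' i : ℕ):ℝ)+1)/n := lt_of_le_of_lt h1.1 h2.2
    have c2 : ((k' i : ℕ):ℝ)/n < (((k i : ℕ):ℝ)+1)/n := lt_of_le_of_lt h2.1 h1.2
    rw [div_lt_div_iff₀ hn0 hn0] at c1 c2
    have e1 : (k i : ℕ) < (k' i : ℕ) + 1 := by
      exact_mod_cast (by nlinarith : ((k i : ℕ):ℝ) < ((k' i : ℕ):ℝ)+1)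
    have e2 : (k' i : ℕ) < (k i : ℕ) + 1 := by
      exact_mod_cast (by nlinarith : ((k' i : ℕ):ℝ) < ((k i : ℕ):ℝ)+1)
    exact hi (Fin.ext (Nat.le_antisymm (Nat.lt_succ_iff.mp e1) (Nat.lt_succ_iff.mp e2)))
  -- the good region and its covering by cells
  set G' : Set (Fin d → ℝ) := Set.univ.pi fun _ : Fin d => Ico (0:ℝ) ((m:ℝ)/n) with hG'
  have hG'meas : MeasurableSet G' := MeasurableSet.univ_pi fun _ => measurableSet_Ico
  have hcover : G' ⊆ ⋃ k, cell k := by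
    intro x hx
    have hx' : ∀ i, 0 ≤ x i ∧ x i < (m:ℝ)/n := fun i => hx i (mem_univ i)
    have hkdef : ∀ i, ⌊x i * n⌋₊ < m := by
      intro i
      rw [Nat.floor_lt (mul_nonneg (hx' i).1 hn0.le)]
      exact (lt_div_iff₀ hn0).mp (hx' i).2
    refine mem_iUnion.mpr ⟨fun i => ⟨⌊x i * n⌋₊, hkdef i⟩, fun i _ => ⟨?_, ?_⟩⟩
    · show ((⌊x i * n⌋₊ : ℕ):ℝ)/n ≤ x i
      rw [div_le_iff₀ hn0]
      exact Nat.floor_le (mul_nonneg (hx' i).1 hn0.le)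
    · show x i < ((⌊x i * n⌋₊ : ℝ) + 1)/n
      rw [lt_div_iff₀ hn0]
      exact Nat.lt_floor_add_one _
  have hmn1 : (m:ℝ)/n < 1 := (div_lt_one hn0).mpr hmn
  have honen : (m:ℝ)/n + 1/n = 1 := by
    rw [← add_div]
    have : (m:ℝ) + 1 = n := by exact_mod_cast hndef.symm
    rw [this, div_self (ne_of_gt hn0)]
  -- bad region
  set Bd : Set (Fin d → ℝ) := K \ ⋃ k, cell k with hBd
  have hBdmeas : MeasurableSet Bd := hKmeas.diff (MeasurableSet.iUnion fun k => hcellmeas k)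
  have hbadslab : K \ G' ⊆ ⋃ i, Set.univ.pi fun j =>
      if j = i then Icc ((m:ℝ)/n) ((m:ℝ)/n + 1/n) else Icc (0:ℝ) 1 := by
    rintro x ⟨hxK, hxG⟩
    have : ¬ ∀ i, x i ∈ Ico (0:ℝ) ((m:ℝ)/n) := fun hc => hxG fun i _ => hc i
    push_neg at this
    obtain ⟨i, hi⟩ := this
    have hxK' : ∀ j, 0 ≤ x j ∧ x j ≤ 1 := fun j => hxK j (mem_univ j)
    have hxi : (m:ℝ)/n ≤ x i := by
      by_contra hcon
      exact hi ⟨(hxK' i).1, lt_of_not_ge hcon⟩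
    refine mem_iUnion.mpr ⟨i, fun j _ => ?_⟩
    show x j ∈ (if j = i then Icc ((m:ℝ)/n) ((m:ℝ)/n + 1/n) else Icc (0:ℝ) 1)
    by_cases hj : j = i
    · subst hj
      rw [if_pos rfl, honen]
      exact ⟨hxi, (hxK' j).2⟩
    · rw [if_neg hj]
      exact hxK' j
  have hBdsub : Bd ⊆ K \ G' := fun x hx => ⟨hx.1, fun hc => hx.2 (hcover hc)⟩
  have hπKG' : (π (K \ G')).toReal ≤ (d:ℝ) * (Mr * (1/n)) :=
    slabs_bound π hM hle (fun _ => (m:ℝ)/n) (by positivity) hbadslab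
  have hπBd : (π Bd).toReal ≤ (d:ℝ) * (Mr * (1/n)) :=
    le_trans (toReal_mono_meas π hBdsub) hπKG'
  have hπG' : 1 - (d:ℝ) * (Mr * (1/n)) ≤ (π G').toReal := by
    have h1 : π K ≤ π G' + π (K \ G') := by
      refine le_trans (measure_mono ?_) (measure_union_le _ _)
      intro x hx
      by_cases h : x ∈ G'
      exacts [Or.inl h, Or.inr ⟨hx, h⟩]
    rw [hπK] at h1
    have h2 := ENNReal.toReal_mono
      (ENNReal.add_ne_top.mpr ⟨measure_ne_top _ _, measure_ne_top _ _⟩) h1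
    rw [ENNReal.toReal_add (measure_ne_top _ _) (measure_ne_top _ _)] at h2
    simp only [ENNReal.toReal_one] at h2
    linarith
  -- constants
  set Kc : ℝ := (Fintype.card (Fin d → Fin m) : ℝ) with hKc
  have hKc0 : 0 ≤ Kc := Nat.cast_nonneg _
  have hA : 0 ≤ (Kc+1)*C*Mr*(d:ℝ) := by positivity
  set η : ℝ := ε/(8*((Kc+1)*C*Mr*(d:ℝ)+1)) with hη_def
  have hη : 0 < η := div_pos hε (by linarith)
  have hηbound : (Kc+1)*C*(Mr*(d:ℝ)*η) ≤ ε/8 := by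
    rw [hη_def, show (Kc+1)*C*(Mr*(d:ℝ)*(ε/(8*((Kc+1)*C*Mr*(d:ℝ)+1)))) =
      ((Kc+1)*C*Mr*(d:ℝ))*ε/(8*((Kc+1)*C*Mr*(d:ℝ)+1)) by ring]
    rw [div_le_div_iff₀ (by linarith) (by norm_num : (0:ℝ) < 8)]
    nlinarith [mul_nonneg hA (le_of_lt hε)]
  have hB : 0 ≤ (Kc+1)*C := by positivity
  refine ⟨ε/(8*((Kc+1)*C+1)), div_pos hε (by linarith), ?_⟩
  intro μ hμinst hE y hy a b h0a hTK
  haveI := hμinst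
  set e := extDist μ π with he
  have he0 : 0 ≤ e := extDist_nonneg μ π
  have hθbound : (Kc+1)*C*e ≤ ε/8 := by
    have h1 : (Kc+1)*C*e ≤ (Kc+1)*C*(ε/(8*((Kc+1)*C+1))) := by
      apply mul_le_mul_of_nonneg_left hE (by linarith)
    refine le_trans h1 ?_
    rw [show (Kc+1)*C*(ε/(8*((Kc+1)*C+1))) = ((Kc+1)*C)*ε/(8*((Kc+1)*C+1)) by ring]
    rw [div_le_div_iff₀ (by linarith) (by norm_num : (0:ℝ) < 8)]
    nlinarith [mul_nonneg hB (le_of_lt hε)]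
  set E' : ℝ := e + Mr*(d:ℝ)*η with hE'
  have hE'0 : 0 ≤ E' := by positivity
  -- integrability
  have hgy : ContinuousOn (fun x => g x y) K := by
    have hmap : Set.MapsTo (fun x => ((x, y) : (Fin d → ℝ) × (Fin d → ℝ))) K (K ×ˢ K) :=
      fun x hx => Set.mk_mem_prod hx hy
    exact hgcont.comp (Continuous.continuousOn (continuous_id.prodMk continuous_const)) hmap
  -- generic estimates for a probability measure
  have approx : ∀ (ν : Measure (Fin d → ℝ)), IsProbabilityMeasure ν →
      ∀ S' : Set (Fin d → ℝ), MeasurableSet S' → S' ⊆ K → ∀ c : ℝ,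
      (∀ x ∈ S', |g x y - c| ≤ ε/8) →
      |∫ x in S', g x y ∂ν - c * (ν S').toReal| ≤ ε/8 * (ν S').toReal := by
    intro ν hν S' hS'm hS'K c hc
    haveI := hν
    have hint : IntegrableOn (fun x => g x y) S' ν :=
      (ContinuousOn.integrableOn_compact' hKcpt hKmeas hgy).mono_set hS'K
    have hintc : IntegrableOn (fun _ => c) S' ν :=
      integrableOn_const (measure_ne_top ν S')
    have heq : ∫ x in S', g x y ∂ν - c * (ν S').toReal = ∫ x in S', (g x y - c) ∂ν := by
      rw [integral_sub hint hintc, setIntegral_const, smul_eq_mul, mul_comm]; rfl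
    rw [heq]
    have := norm_setIntegral_le_of_norm_le_const_ae (μ := ν) (s := S')
      (f := fun x => g x y - c) (C := ε/8) (measure_lt_top ν S') ?_
    · simpa [Real.norm_eq_abs, Measure.real] using this
    · filter_upwards [ae_restrict_mem hS'm] with x hx
      simpa [Real.norm_eq_abs] using hc x hx
  have bnd : ∀ (ν : Measure (Fin d → ℝ)), IsProbabilityMeasure ν →
      ∀ S' : Set (Fin d → ℝ), MeasurableSet S' → S' ⊆ K →
      |∫ x in S', g x y ∂ν| ≤ C * (ν S').toReal := by
    intro ν hν S' hS'm hS'K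
    haveI := hν
    have := norm_setIntegral_le_of_norm_le_const_ae (μ := ν) (s := S')
      (f := fun x => g x y) (C := C) (measure_lt_top ν S') ?_
    · simpa [Real.norm_eq_abs, Measure.real] using this
    · filter_upwards [ae_restrict_mem hS'm] with x hx
      simpa [Real.norm_eq_abs] using hC x (hS'K hx) y hy
  -- the target box and cell pieces
  set T := clBox a b with hT
  have hTmeas : MeasurableSet T := measurable_clBox a b
  set S : (Fin d → Fin m) → Set (Fin d → ℝ) := fun k => cell k ∩ T with hS
  have hSmeas : ∀ k, MeasurableSet (S k) := fun k => (hcellmeas k).inter hTmeas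
  have hSsubK : ∀ k, S k ⊆ K := fun k => Set.Subset.trans Set.inter_subset_left (hcellK k)
  have hSdisj : Pairwise (Function.onFun Disjoint S) := fun k k' hkk' =>
    Set.disjoint_of_subset Set.inter_subset_left Set.inter_subset_left (hcelldisj hkk')
  -- decomposition of the integral
  have hTdecomp : T = (⋃ k, S k) ∪ (Bd ∩ T) := by
    apply Subset.antisymm
    · intro x hx
      by_cases hxc : x ∈ ⋃ k, cell k
      · obtain ⟨k, hk⟩ := mem_iUnion.mp hxc
        exact Or.inl (mem_iUnion.mpr ⟨k, hk, hx⟩)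
      · exact Or.inr ⟨⟨hTK hx, hxc⟩, hx⟩
    · rintro x (hx | hx)
      · obtain ⟨k, hk⟩ := mem_iUnion.mp hx
        exact hk.2
      · exact hx.2
  have hBdTK : Bd ∩ T ⊆ K := Set.Subset.trans Set.inter_subset_left Set.diff_subset
  have hsplit : ∀ (ν : Measure (Fin d → ℝ)), IsProbabilityMeasure ν →
      ∫ x in T, g x y ∂ν = (∑ k, ∫ x in S k, g x y ∂ν) + ∫ x in Bd ∩ T, g x y ∂ν := by
    intro ν hν
    haveI := hν
    have hintK : IntegrableOn (fun x => g x y) K ν :=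
      ContinuousOn.integrableOn_compact' hKcpt hKmeas hgy
    have hdisj2 : Disjoint (⋃ k, S k) (Bd ∩ T) := by
      rw [Set.disjoint_left]
      intro x hx hx2
      obtain ⟨k, hk⟩ := mem_iUnion.mp hx
      exact hx2.1.2 (mem_iUnion.mpr ⟨k, hk.1⟩)
    nth_rewrite 1 [hTdecomp]
    rw [setIntegral_union hdisj2 (hBdmeas.inter hTmeas)
      (hintK.mono_set (Set.iUnion_subset hSsubK)) (hintK.mono_set hBdTK),
      integral_iUnion_fintype hSmeas hSdisj (fun k => hintK.mono_set (hSsubK k))]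
  -- per-cell estimates
  have cellkey : ∀ k, |(μ (S k)).toReal - (π (S k)).toReal| ≤ E' := by
    intro k
    refine key_est μ π hM hle (S := S k)
      (α := fun i => max (((k i : ℕ):ℝ)/n) (a i))
      (β := fun i => min ((((k i : ℕ):ℝ)+1)/n) (b i))
      (fun i => le_trans (by positivity) (le_max_left _ _))
      (fun i => by
        have hki : ((k i : ℕ):ℝ) + 1 ≤ (m:ℝ) := by
          exact_mod_cast Nat.succ_le_of_lt (k i).isLt
        calc min ((((k i : ℕ):ℝ)+1)/n) (b i) ≤ (((k i : ℕ):ℝ)+1)/n := min_le_left _ _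
          _ ≤ (m:ℝ)/n := by gcongr
          _ < 1 := hmn1)
      hη ?_ ?_
    · -- inner inclusion
      intro x hx
      have hxi : ∀ j, max (((k j : ℕ):ℝ)/n) (a j) ≤ x j ∧
          x j ≤ min ((((k j : ℕ):ℝ)+1)/n) (b j) - η := fun j => hx j (mem_univ j)
      constructor
      · intro j _
        refine ⟨le_trans (le_max_left _ _) (hxi j).1, ?_⟩
        have h2 := (hxi j).2
        have h3 : min ((((k j : ℕ):ℝ)+1)/n) (b j) ≤ (((k j : ℕ):ℝ)+1)/n := min_le_left _ _
        linarith
      · intro j _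
        refine ⟨le_trans (le_max_right _ _) (hxi j).1, ?_⟩
        have h2 := (hxi j).2
        have h3 : min ((((k j : ℕ):ℝ)+1)/n) (b j) ≤ b j := min_le_right _ _
        linarith
    · -- outer inclusion
      rintro x ⟨hxc, hxT⟩ j _
      have h1 : x j ∈ Ico (((k j : ℕ):ℝ)/n) ((((k j : ℕ):ℝ)+1)/n) := hxc j (mem_univ j)
      have h2 : x j ∈ Icc (a j) (b j) := hxT j (mem_univ j)
      exact ⟨max_le h1.1 h2.1, le_min (le_of_lt h1.2) h2.2⟩
  have cellest : ∀ k, |∫ x in S k, g x y ∂μ - ∫ x in S k, g x y ∂π| ≤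
      ε/8 * ((μ (S k)).toReal + (π (S k)).toReal) + C * E' := by
    intro k
    set ξ : Fin d → ℝ := fun i => ((k i : ℕ):ℝ)/n with hξ
    have hξK : ξ ∈ K := by
      intro i _
      constructor
      · positivity
      · have hki : ((k i : ℕ):ℝ) ≤ (n:ℝ) := by
          have h := le_of_lt (Nat.lt_of_lt_of_le (k i).isLt (Nat.le_succ m))
          exact_mod_cast h
        rw [div_le_one hn0]
        exact hki
    have hosc : ∀ x ∈ S k, |g x y - g ξ y| ≤ ε/8 := by
      intro x hx
      have hxK : x ∈ K := hSsubK k hx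
      have hdist : dist x ξ ≤ 1/n := by
        rw [dist_pi_le_iff (by positivity)]
        intro i
        have h1 : x i ∈ Ico (((k i : ℕ):ℝ)/n) ((((k i : ℕ):ℝ)+1)/n) := hx.1 i (mem_univ i)
        rw [Real.dist_eq, abs_le]
        have : (((k i : ℕ):ℝ)+1)/n = ((k i : ℕ):ℝ)/n + 1/n := by rw [add_div]
        constructor <;> [skip; skip] <;> simp only [hξ] <;> linarith [h1.1, h1.2, this ▸ h1.2]
      exact hδ x hxK ξ hξK y hy (lt_of_le_of_lt hdist hinvn)
    have happμ := approx μ inferInstance (S k) (hSmeas k) (hSsubK k) (g ξ y) hosc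
    have happπ := approx π inferInstance (S k) (hSmeas k) (hSsubK k) (g ξ y) hosc
    have hkey := cellkey k
    have hgξ : |g ξ y| ≤ C := hC ξ hξK y hy
    set Iμ := ∫ x in S k, g x y ∂μ
    set Iπ := ∫ x in S k, g x y ∂π
    set c := g ξ y
    set Mμ := (μ (S k)).toReal
    set Mπ := (π (S k)).toReal
    have hMμ0 : 0 ≤ Mμ := ENNReal.toReal_nonneg
    have hMπ0 : 0 ≤ Mπ := ENNReal.toReal_nonneg
    have htri : |Iμ - Iπ| ≤ |Iμ - c*Mμ| + |c*Mμ - c*Mπ| + |c*Mπ - Iπ| := by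
      calc |Iμ - Iπ| ≤ |Iμ - c*Mπ| + |c*Mπ - Iπ| := abs_sub_le _ _ _
        _ ≤ (|Iμ - c*Mμ| + |c*Mμ - c*Mπ|) + |c*Mπ - Iπ| := by
            linarith [abs_sub_le Iμ (c*Mμ) (c*Mπ)]
    have hmid : |c*Mμ - c*Mπ| ≤ C * E' := by
      rw [← mul_sub, abs_mul]
      exact mul_le_mul hgξ hkey (abs_nonneg _) hC0
    have hlast : |c*Mπ - Iπ| = |Iπ - c*Mπ| := abs_sub_comm _ _
    rw [hlast] at htri
    have hfin : |Iμ - c*Mμ| + |c*Mμ - c*Mπ| + |Iπ - c*Mπ| ≤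
        ε/8 * Mμ + C * E' + ε/8 * Mπ := add_le_add (add_le_add happμ hmid) happπ
    refine le_trans htri (le_trans hfin (le_of_eq (by ring)))
  -- sums of cell masses
  have hsummass : ∀ (ν : Measure (Fin d → ℝ)), IsProbabilityMeasure ν →
      ∑ k, (ν (S k)).toReal ≤ 1 := by
    intro ν hν
    haveI := hν
    have h1 : ∑ k, ν (S k) = ν (⋃ k ∈ (Finset.univ : Finset (Fin d → Fin m)), S k) := by
      rw [measure_biUnion_finset ?_ (fun k _ => hSmeas k)]
      intro k _ k' _ hkk'
      exact hSdisj hkk'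
    have h2 : (∑ k, ν (S k)).toReal = ∑ k, (ν (S k)).toReal :=
      ENNReal.toReal_sum fun k _ => measure_ne_top _ _
    rw [← h2, h1]
    exact toReal_le_one ν _
  -- bad region mass bounds
  have hkeyG' : |(μ G').toReal - (π G').toReal| ≤ E' := by
    refine key_est μ π hM hle (α := fun _ => (0:ℝ)) (β := fun _ => (m:ℝ)/n)
      (fun _ => le_refl 0) (fun _ => hmn1) hη ?_ ?_
    · intro x hx i _
      have h := hx i (mem_univ i)
      exact ⟨h.1, lt_of_le_of_lt h.2 (by linarith)⟩
    · intro x hx i _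
      have h := hx i (mem_univ i)
      exact ⟨h.1, le_of_lt h.2⟩
  have hμBd : (μ Bd).toReal ≤ (d:ℝ) * (Mr * (1/n)) + E' := by
    have hdisjBG : Disjoint Bd G' := by
      rw [Set.disjoint_left]
      intro x hx hxG
      exact hx.2 (hcover hxG)
    have h1 : μ Bd + μ G' = μ (Bd ∪ G') := (measure_union hdisjBG hG'meas).symm
    have h2 : μ (Bd ∪ G') ≤ 1 := prob_le_one
    have h3 : (μ Bd).toReal + (μ G').toReal ≤ 1 := by
      have h4 := ENNReal.toReal_mono (by simp) (h1 ▸ h2 : μ Bd + μ G' ≤ 1)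
      rwa [ENNReal.toReal_add (measure_ne_top _ _) (measure_ne_top _ _),
        ENNReal.toReal_one] at h4
    have h5 : (π G').toReal - E' ≤ (μ G').toReal := by
      have := abs_le.mp hkeyG'
      linarith [this.1]
    linarith [hπG']
  -- final assembly
  rw [hsplit μ inferInstance, hsplit π inferInstance]
  have hBdμ : |∫ x in Bd ∩ T, g x y ∂μ| ≤ C * ((d:ℝ) * (Mr * (1/n)) + E') := by
    refine le_trans (bnd μ inferInstance (Bd ∩ T) (hBdmeas.inter hTmeas) hBdTK) ?_
    have := le_trans (toReal_mono_meas μ (Set.inter_subset_left : Bd ∩ T ⊆ Bd)) hμBd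
    exact mul_le_mul_of_nonneg_left this hC0
  have hBdπ : |∫ x in Bd ∩ T, g x y ∂π| ≤ C * ((d:ℝ) * (Mr * (1/n))) := by
    refine le_trans (bnd π inferInstance (Bd ∩ T) (hBdmeas.inter hTmeas) hBdTK) ?_
    have := le_trans (toReal_mono_meas π (Set.inter_subset_left : Bd ∩ T ⊆ Bd)) hπBd
    exact mul_le_mul_of_nonneg_left this hC0
  have hsumest : |∑ k, ∫ x in S k, g x y ∂μ - ∑ k, ∫ x in S k, g x y ∂π| ≤
      ε/8 * 2 + Kc * (C * E') := by
    rw [← Finset.sum_sub_distrib]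
    refine le_trans (Finset.abs_sum_le_sum_abs _ _) ?_
    refine le_trans (Finset.sum_le_sum fun k _ => cellest k) ?_
    rw [Finset.sum_add_distrib, Finset.sum_const, Finset.card_univ, ← Finset.mul_sum,
      Finset.sum_add_distrib]
    have h1 := hsummass μ inferInstance
    have h2 := hsummass π inferInstance
    have h3 : ∑ k, (μ (S k)).toReal + ∑ k, (π (S k)).toReal ≤ 2 := by linarith
    have h4 : ε/8 * (∑ k, (μ (S k)).toReal + ∑ k, (π (S k)).toReal) ≤ ε/8 * 2 :=
      mul_le_mul_of_nonneg_left h3 (by positivity)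
    rw [mul_add] at h4
    simp only [nsmul_eq_mul, hKc]
    linarith
  have htri2 : |((∑ k, ∫ x in S k, g x y ∂μ) + ∫ x in Bd ∩ T, g x y ∂μ) -
      ((∑ k, ∫ x in S k, g x y ∂π) + ∫ x in Bd ∩ T, g x y ∂π)| ≤
      |∑ k, ∫ x in S k, g x y ∂μ - ∑ k, ∫ x in S k, g x y ∂π| +
      |∫ x in Bd ∩ T, g x y ∂μ| + |∫ x in Bd ∩ T, g x y ∂π| := by
    have := abs_add_le (∑ k, ∫ x in S k, g x y ∂μ - ∑ k, ∫ x in S k, g x y ∂π)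
      (∫ x in Bd ∩ T, g x y ∂μ - ∫ x in Bd ∩ T, g x y ∂π)
    have h2 := abs_sub (∫ x in Bd ∩ T, g x y ∂μ) (∫ x in Bd ∩ T, g x y ∂π)
    calc _ = |(∑ k, ∫ x in S k, g x y ∂μ - ∑ k, ∫ x in S k, g x y ∂π) +
        (∫ x in Bd ∩ T, g x y ∂μ - ∫ x in Bd ∩ T, g x y ∂π)| := by ring_nf
      _ ≤ _ := by
          refine le_trans this ?_
          linarith [abs_sub_abs_le_abs_sub (∫ x in Bd ∩ T, g x y ∂μ) (∫ x in Bd ∩ T, g x y ∂π)]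
  refine le_trans htri2 ?_
  -- numeric conclusion
  have hED : (Kc+1)*C*E' ≤ ε/4 := by
    rw [hE', mul_add]
    have := hθbound
    have h2 : (Kc+1)*C*(Mr*(d:ℝ)*η) ≤ ε/8 := hηbound
    linarith
  have hn2 : 2*C*((d:ℝ)*(Mr*(1/n))) ≤ ε/4 := by
    have : 2*C*((d:ℝ)*(Mr*(1/n))) = 2*C*(Mr*(d:ℝ))/n := by ring
    rw [this]
    exact hCn
  have hfin : ε/8*2 + Kc*(C*E') + C*((d:ℝ)*(Mr*(1/n)) + E') + C*((d:ℝ)*(Mr*(1/n))) ≤ ε := by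
    nlinarith [mul_nonneg hC0 hE'0]
  linarith [hsumest, hBdμ, hBdπ]

end BKUCaux

/-- abstract form of Theorem 2, part 1: if `π^N → π` in extreme norm,
`π` has a bounded density, and `g̃ ≥ 0` is continuous on the cube with
`∫ g̃(x,y) π(dx) = 1` for all `y`, then the normalizing constants
`c_N = inf_y ∫ g̃(x,y) π^N(dx)` are eventually positive and the reweighted kernels
`M^N(y,dx) = g̃(x,y) π^N(dx) / ∫ g̃(x',y) π^N(dx')` converge to `M(y,dx) = g̃(x,y) π(dx)`
in extreme norm, uniformly in `y ∈ [0,1]^d`. -/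

theorem backward_kernel_uniform_consistency
    {d : ℕ} (hd : 1 ≤ d)
    (πseq : ℕ → Measure (Fin d → ℝ)) (π : Measure (Fin d → ℝ))
    [∀ N, IsProbabilityMeasure (πseq N)] [IsProbabilityMeasure π]
    (hseqc : ∀ N, πseq N (cubeIcc d) = 1) (hπc : π (cubeIcc d) = 1)
    (hconv : Tendsto (fun N => extDist (πseq N) π) atTop (nhds 0))
    (hdens : ∃ M : ℝ≥0∞, M ≠ ⊤ ∧ π ≤ M • volume)
    (g : (Fin d → ℝ) → (Fin d → ℝ) → ℝ)
    (hgcont : ContinuousOn (fun p : (Fin d → ℝ) × (Fin d → ℝ) => g p.1 p.2)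
      (cubeIcc d ×ˢ cubeIcc d))
    (hgnn : ∀ x ∈ cubeIcc d, ∀ y ∈ cubeIcc d, 0 ≤ g x y)
    (hgint : ∀ y ∈ cubeIcc d, ∫ x, g x y ∂π = 1) :
    (∀ᶠ N in atTop, 0 < ⨅ y : ↥(cubeIcc d), ∫ x, g x (y : Fin d → ℝ) ∂(πseq N)) ∧
    (∀ ε > 0, ∀ᶠ N in atTop, ∀ y ∈ cubeIcc d,
      extDist
        ((ENNReal.ofReal (∫ x, g x y ∂(πseq N)))⁻¹ •
          (πseq N).withDensity fun x => ENNReal.ofReal (g x y))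
        (π.withDensity fun x => ENNReal.ofReal (g x y)) ≤ ε) := by
  classical
  obtain ⟨M, hMtop, hMle⟩ := hdens
  have hKmeas : MeasurableSet (cubeIcc d) := BKUCaux.measurable_cube
  have hKIcc : cubeIcc d = Set.Icc (0 : Fin d → ℝ) 1 := by
    rw [cubeIcc, ← Set.pi_univ_Icc]; rfl
  have hKcpt : IsCompact (cubeIcc d) := by rw [hKIcc]; exact isCompact_Icc
  have hKbox : cubeIcc d = clBox (fun _ : Fin d => (0:ℝ)) (fun _ : Fin d => (1:ℝ)) := rfl
  -- null complements and restriction identities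
  have hcompl : ∀ (μ' : Measure (Fin d → ℝ)), IsProbabilityMeasure μ' →
      μ' (cubeIcc d) = 1 → μ' (cubeIcc d)ᶜ = 0 := by
    intro μ' h1 h2
    haveI := h1
    rw [measure_compl hKmeas (measure_ne_top _ _), h2, measure_univ, tsub_self]
  have hπc' : π (cubeIcc d)ᶜ = 0 := hcompl π inferInstance hπc
  have hseqc' : ∀ N, πseq N (cubeIcc d)ᶜ = 0 := fun N => hcompl (πseq N) inferInstance (hseqc N)
  have hmemae : ∀ (μ' : Measure (Fin d → ℝ)), μ' (cubeIcc d)ᶜ = 0 →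
      ∀ᵐ x ∂μ', x ∈ cubeIcc d := by
    intro μ' h0
    rw [ae_iff]
    exact h0
  have hres : ∀ (μ' : Measure (Fin d → ℝ)), μ' (cubeIcc d)ᶜ = 0 →
      μ'.restrict (cubeIcc d) = μ' := fun μ' h =>
    Measure.restrict_eq_self_of_ae_mem (hmemae μ' h)
  -- bound for g
  obtain ⟨C₀, hC₀⟩ := (hKcpt.prod hKcpt).exists_bound_of_continuousOn hgcont
  set C := max C₀ 0 with hCdef
  have hC0 : 0 ≤ C := le_max_right _ _
  have hC : ∀ x ∈ cubeIcc d, ∀ y ∈ cubeIcc d, |g x y| ≤ C := by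
    intro x hx y hy
    exact le_trans (hC₀ (x, y) (Set.mk_mem_prod hx hy)) (le_max_left _ _)
  -- continuity in x for fixed y
  have hgy : ∀ y ∈ cubeIcc d, ContinuousOn (fun x => g x y) (cubeIcc d) := by
    intro y hy
    exact hgcont.comp (Continuous.continuousOn (continuous_id.prodMk continuous_const))
      (fun x hx => Set.mk_mem_prod hx hy)
  -- almost-everywhere facts
  have hAESM : ∀ (μ' : Measure (Fin d → ℝ)), μ' (cubeIcc d)ᶜ = 0 → ∀ y ∈ cubeIcc d,
      AEStronglyMeasurable (fun x => g x y) μ' := by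
    intro μ' h0 y hy
    have h := ContinuousOn.aestronglyMeasurable_of_isCompact (μ := μ') (hgy y hy) hKcpt hKmeas
    rwa [hres μ' h0] at h
  have hnnae : ∀ (μ' : Measure (Fin d → ℝ)), μ' (cubeIcc d)ᶜ = 0 → ∀ y ∈ cubeIcc d,
      0 ≤ᵐ[μ'] fun x => g x y := by
    intro μ' h0 y hy
    filter_upwards [hmemae μ' h0] with x hx
    exact hgnn x hx y hy
  -- lintegral/integral comparison on measurable sets
  have hlint : ∀ (μ' : Measure (Fin d → ℝ)), IsProbabilityMeasure μ' →
      μ' (cubeIcc d)ᶜ = 0 → ∀ y ∈ cubeIcc d, ∀ B : Set (Fin d → ℝ), MeasurableSet B →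
      (∫⁻ x in B, ENNReal.ofReal (g x y) ∂μ') ≠ ⊤ ∧
      (∫⁻ x in B, ENNReal.ofReal (g x y) ∂μ').toReal = ∫ x in B, g x y ∂μ' := by
    intro μ' hP h0 y hy B hB
    haveI := hP
    constructor
    · have hbound : ∀ᵐ x ∂(μ'.restrict B), ENNReal.ofReal (g x y) ≤ ENNReal.ofReal C :=
        ae_restrict_of_ae ((hmemae μ' h0).mono fun x hx =>
          ENNReal.ofReal_le_ofReal (le_trans (le_abs_self _) (hC x hx y hy)))
      have h1 : ∫⁻ x in B, ENNReal.ofReal (g x y) ∂μ' ≤ ∫⁻ _x in B, ENNReal.ofReal C ∂μ' :=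
        lintegral_mono_ae hbound
      have h2 : ∫⁻ _x in B, ENNReal.ofReal C ∂μ' = ENNReal.ofReal C * μ' B :=
        setLIntegral_const B _
      exact ne_top_of_le_ne_top
        (ENNReal.mul_ne_top ENNReal.ofReal_ne_top (measure_ne_top _ _)) (h1.trans_eq h2)
    · exact (integral_eq_lintegral_of_nonneg_ae (μ := μ'.restrict B)
        (ae_restrict_of_ae (hnnae μ' h0 y hy)) ((hAESM μ' h0 y hy).restrict)).symm
  -- bound for set integrals against π
  have hXbd : ∀ y ∈ cubeIcc d, ∀ B : Set (Fin d → ℝ), |∫ x in B, g x y ∂π| ≤ C := by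
    intro y hy B
    have h1 := norm_setIntegral_le_of_norm_le_const_ae (μ := π) (s := B)
      (f := fun x => g x y) (C := C) (measure_lt_top π B)
      (by filter_upwards [ae_restrict_of_ae (hmemae π hπc')] with x hx
          simpa [Real.norm_eq_abs] using hC x hx y hy)
    rw [Real.norm_eq_abs] at h1
    refine le_trans h1 ?_
    calc C * (π B).toReal ≤ C * 1 :=
          mul_le_mul_of_nonneg_left (BKUCaux.toReal_le_one π B) hC0
      _ = C := mul_one C
  -- the uniform estimate from the grid lemma
  have hmain : ∀ ε' > (0:ℝ), ∀ᶠ N in atTop, ∀ y ∈ cubeIcc d, ∀ a b : Fin d → ℝ,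
      (∀ i, 0 ≤ a i) → clBox a b ⊆ cubeIcc d →
      |∫ x in clBox a b, g x y ∂(πseq N) - ∫ x in clBox a b, g x y ∂π| ≤ ε' := by
    intro ε' hε'
    obtain ⟨θ, hθ0, hθ⟩ := BKUCaux.main_est hd π hMtop hMle hπc g hgcont hε'
    have hev : ∀ᶠ N in atTop, extDist (πseq N) π ≤ θ :=
      (hconv.eventually_lt_const hθ0).mono fun N hN => le_of_lt hN
    filter_upwards [hev] with N hN
    exact hθ (πseq N) inferInstance hN
  -- normalizing constants are uniformly close to 1
  have hcNlem : ∀ ε' > (0:ℝ), ∀ᶠ N in atTop, ∀ y ∈ cubeIcc d,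
      |(∫ x, g x y ∂(πseq N)) - 1| ≤ ε' := by
    intro ε' hε'
    filter_upwards [hmain ε' hε'] with N hN y hy
    have h1 := hN y hy (fun _ => (0:ℝ)) (fun _ => (1:ℝ)) (fun _ => le_rfl)
      (by rw [← hKbox])
    have h2 : ∫ x in clBox (fun _ : Fin d => (0:ℝ)) (fun _ : Fin d => (1:ℝ)), g x y ∂(πseq N)
        = ∫ x, g x y ∂(πseq N) := by
      rw [← hKbox]
      show ∫ x, g x y ∂((πseq N).restrict (cubeIcc d)) = _
      rw [hres (πseq N) (hseqc' N)]
    have h3 : ∫ x in clBox (fun _ : Fin d => (0:ℝ)) (fun _ : Fin d => (1:ℝ)), g x y ∂π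
        = 1 := by
      rw [← hKbox]
      show ∫ x, g x y ∂(π.restrict (cubeIcc d)) = 1
      rw [hres π hπc']
      exact hgint y hy
    rw [h2, h3] at h1
    exact h1
  haveI hne : Nonempty ↥(cubeIcc d) :=
    ⟨⟨fun _ => 0, fun i _ => ⟨le_rfl, zero_le_one⟩⟩⟩
  constructor
  · -- Part 1
    filter_upwards [hcNlem (1/2) (by norm_num)] with N hN
    have hlow : ∀ y : ↥(cubeIcc d), (1:ℝ)/2 ≤ ∫ x, g x (y : Fin d → ℝ) ∂(πseq N) := by
      intro y
      have h := abs_le.mp (hN (y : Fin d → ℝ) y.2)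
      linarith [h.1]
    exact lt_of_lt_of_le (by norm_num) (le_ciInf hlow)
  · -- Part 2
    intro ε hε
    set ε' := min (1/2 : ℝ) (ε/(2+2*C)) with hε'def
    have hε'0 : 0 < ε' := lt_min (by norm_num) (div_pos hε (by linarith))
    have hε'half : ε' ≤ 1/2 := min_le_left _ _
    have hε'C : ε' * (2+2*C) ≤ ε := by
      have h1 : ε' ≤ ε/(2+2*C) := min_le_right _ _
      rw [← le_div_iff₀ (by linarith : (0:ℝ) < 2+2*C)]
      exact h1
    filter_upwards [hmain ε' hε'0, hcNlem ε' hε'0] with N hbox hcn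
    intro y hy
    have hcN1 : |(∫ x, g x y ∂(πseq N)) - 1| ≤ ε' := hcn y hy
    set cN := ∫ x, g x y ∂(πseq N) with hcNdef
    have hcNhalf : 1/2 ≤ cN := by
      have h := abs_le.mp hcN1
      linarith [h.1]
    have hcN0 : 0 < cN := by linarith
    refine Real.iSup_le ?_ (le_of_lt hε)
    rintro ⟨⟨a, b⟩, hgood⟩
    have hBmeas : MeasurableSet (clBox a b) := BKUCaux.measurable_clBox a b
    have hBK : clBox a b ⊆ cubeIcc d := BKUCaux.clBox_subset_cube
      (fun i => (hgood i).1) (fun i => le_of_lt (hgood i).2.2)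
    have h0a : ∀ i, 0 ≤ a i := fun i => (hgood i).1
    obtain ⟨hfinN, heqN⟩ := hlint (πseq N) inferInstance (hseqc' N) y hy (clBox a b) hBmeas
    obtain ⟨hfinπ, heqπ⟩ := hlint π inferInstance hπc' y hy (clBox a b) hBmeas
    set XN := ∫ x in clBox a b, g x y ∂(πseq N) with hXNdef
    set X := ∫ x in clBox a b, g x y ∂π with hXdef
    have hXNX : |XN - X| ≤ ε' := hbox y hy a b h0a hBK
    have hXC : X ≤ C := le_trans (le_abs_self X) (hXbd y hy (clBox a b))
    have hX0 : 0 ≤ X := heqπ ▸ ENNReal.toReal_nonneg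
    have hXN0 : 0 ≤ XN := heqN ▸ ENNReal.toReal_nonneg
    show |(((ENNReal.ofReal cN)⁻¹ •
        (πseq N).withDensity fun x => ENNReal.ofReal (g x y)) (clBox a b)).toReal -
        ((π.withDensity fun x => ENNReal.ofReal (g x y)) (clBox a b)).toReal| ≤ ε
    have hterm : ((ENNReal.ofReal cN)⁻¹ •
        (πseq N).withDensity fun x => ENNReal.ofReal (g x y)) (clBox a b)
        = (ENNReal.ofReal cN)⁻¹ * ∫⁻ x in clBox a b, ENNReal.ofReal (g x y) ∂(πseq N) := by
      rw [Measure.smul_apply, smul_eq_mul, withDensity_apply _ hBmeas]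
    have htermπ : (π.withDensity fun x => ENNReal.ofReal (g x y)) (clBox a b)
        = ∫⁻ x in clBox a b, ENNReal.ofReal (g x y) ∂π := withDensity_apply _ hBmeas
    rw [hterm, htermπ, heqπ, ENNReal.toReal_mul, ENNReal.toReal_inv,
      ENNReal.toReal_ofReal (by linarith : (0:ℝ) ≤ cN), heqN]
    -- final arithmetic: |cN⁻¹ * XN - X| ≤ ε
    have hinv1 : cN⁻¹ * cN = 1 := inv_mul_cancel₀ (ne_of_gt hcN0)
    have hinv0 : 0 < cN⁻¹ := inv_pos.mpr hcN0
    have hinv2 : cN⁻¹ ≤ 2 := by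
      have h2 : (2:ℝ)⁻¹ ≤ cN := by norm_num; linarith
      calc cN⁻¹ ≤ ((2:ℝ)⁻¹)⁻¹ := inv_anti₀ (by norm_num) h2
        _ = 2 := by norm_num
    have e1 : cN⁻¹*XN - X = cN⁻¹*(XN - X) + (cN⁻¹*(1 - cN))*X := by
      field_simp
      ring
    have e2 : |cN⁻¹*XN - X| ≤ cN⁻¹*|XN-X| + (cN⁻¹*|1-cN|)*X := by
      rw [e1]
      refine le_trans (abs_add_le _ _) ?_
      rw [abs_mul, abs_mul, abs_mul, abs_of_pos hinv0, abs_of_nonneg hX0]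
    have h1cN : |1 - cN| ≤ ε' := by
      rw [abs_sub_comm]
      exact hcN1
    have e3 : cN⁻¹*|XN-X| ≤ 2*ε' :=
      mul_le_mul hinv2 hXNX (abs_nonneg _) (by norm_num)
    have e4 : (cN⁻¹*|1-cN|)*X ≤ (2*ε')*C := by
      refine mul_le_mul ?_ hXC hX0 (by positivity)
      exact mul_le_mul hinv2 h1cN (abs_nonneg _) (by norm_num)
    calc |cN⁻¹*XN - X| ≤ cN⁻¹*|XN-X| + (cN⁻¹*|1-cN|)*X := e2
      _ ≤ 2*ε' + (2*ε')*C := add_le_add e3 e4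
      _ = ε' * (2+2*C) := by ring
      _ ≤ ε := hε'C
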